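/- Let (X, f) be a compact metric dynamical system with f a transitive homeomorphism, X without isolated points. Suppose x, y ∈ X have dense forward and backward orbits and disjoint two-sided orbits, and let k ∈ ℕ. Then there exists a strictly increasing sequence (h_n) of natural numbers and a sequence of 1/n-chains C_n : x, f(x), …, f^{h_n}(x), f^{-k}(y), …, f^{-1}(y), y from x to y such that each C_n is acyclic, the supports are nested (support(C_n) ⊆ support(C_{n+1})), and the union of supports minus {x, y} equals {f^m(x) : m ≥ 1} ∪ {f^{-k}(y), …, f^{-1}(y)}. -/

import Mathlib

/-- `C 0, C 1, …, C m` is an ε-chain for `f` from `x` to `y`. -/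
def IsEpsChain {X : Type*} [MetricSpace X] (f : X → X) (ε : ℝ) (C : ℕ → X) (m : ℕ)
    (x y : X) : Prop :=
  1 ≤ m ∧ C 0 = x ∧ C m = y ∧ ∀ i < m, dist (f (C i)) (C (i + 1)) < ε

/-- The chain `C 0, …, C m` contains a cyclic sub-chain. -/
def HasCyclicSubchain {X : Type*} (C : ℕ → X) (m : ℕ) : Prop :=
  (∃ i j, 1 ≤ i ∧ i < m ∧ 1 ≤ j ∧ j < m ∧ i ≠ j ∧ C i = C j) ∨
  (∃ i, 1 ≤ i ∧ i < m ∧ (C i = C 0 ∨ C i = C m))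

/-- The support (set of points) of the chain `C 0, …, C m`. -/
def chainSupport {X : Type*} (C : ℕ → X) (m : ℕ) : Set X := {p | ∃ i ≤ m, C i = p}

/-- The two-sided orbit `O(x) = {f^k(x) : k ∈ ℤ}`. -/
def orbitZ {X : Type*} (F : Equiv.Perm X) (x : X) : Set X := {y | ∃ k : ℤ, (F ^ k) x = y}

/-- Realization of the order type `ω + k` by nested acyclic `1/n`-chains
`x, f(x), …, f^{h_n}(x), f^{-k}(y), …, f^{-1}(y), y`. -/

private def chainH (g : ℕ → ℕ → ℕ) : ℕ → ℕ
  | 0 => 0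
  | n + 1 => g n (chainH g n)

private lemma myInfiniteUniv {X : Type*} [MetricSpace X]
    (hno : ∀ p : X, (nhdsWithin p {p}ᶜ).NeBot) (x0 : X) : (Set.univ : Set X).Infinite := by
  haveI : (nhdsWithin x0 {x0}ᶜ).NeBot := hno x0
  exact infinite_of_mem_nhds x0 Filter.univ_mem

private lemma myInj {X : Type*} [MetricSpace X] (f : X ≃ₜ X)
    (hinf : (Set.univ : Set X).Infinite) (x : X)
    (hxf : Dense {p | ∃ i : ℕ, (f.toEquiv ^ (i : ℤ)) x = p}) :
    Function.Injective (fun i : ℤ => (f.toEquiv ^ i) x) := by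
  set F := f.toEquiv with hF
  intro a b hab
  by_contra hne
  simp only [] at hab
  have h2 : x = (F ^ (b - a)) x := by
    have h := congrArg (fun z => (F ^ (-a)) z) hab
    rwa [← Equiv.Perm.mul_apply, ← Equiv.Perm.mul_apply, ← zpow_add, ← zpow_add,
      neg_add_cancel, zpow_zero, Equiv.Perm.one_apply, neg_add_eq_sub] at h
  have hd0 : b - a ≠ 0 := sub_ne_zero_of_ne (fun h => hne h.symm)
  set e : ℕ := (b - a).natAbs with hedef
  have he1 : 1 ≤ e := Int.natAbs_pos.mpr hd0
  have he : (F ^ (e : ℤ)) x = x := by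
    rcases Int.natAbs_eq (b - a) with h | h
    · rw [← h]; exact h2.symm
    · have h3 := congrArg (fun z => (F ^ (e : ℤ)) z) h2
      rw [h, ← Equiv.Perm.mul_apply, ← zpow_add, add_neg_cancel, zpow_zero,
        Equiv.Perm.one_apply] at h3
      exact h3
  have claim : ∀ i : ℕ, ∃ j : ℕ, j < e ∧ (F ^ (i : ℤ)) x = (F ^ (j : ℤ)) x := by
    intro i
    induction i using Nat.strong_induction_on with
    | _ i ih =>
      by_cases hie : i < e
      · exact ⟨i, hie, rfl⟩
      · obtain ⟨j, hj, hj2⟩ := ih (i - e) (by omega)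
        refine ⟨j, hj, ?_⟩
        have hc : (i : ℤ) = ((i - e : ℕ) : ℤ) + (e : ℤ) := by omega
        rw [hc, zpow_add, Equiv.Perm.mul_apply, he, hj2]
  have hsub : {p | ∃ i : ℕ, (F ^ (i : ℤ)) x = p} ⊆
      (fun j : ℕ => (F ^ (j : ℤ)) x) '' (Set.Iio e) := by
    rintro p ⟨i, rfl⟩
    obtain ⟨j, hj, hj2⟩ := claim i
    exact ⟨j, hj, hj2.symm⟩
  have hTfin : ((fun j : ℕ => (F ^ (j : ℤ)) x) '' (Set.Iio e)).Finite :=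
    (Set.finite_Iio e).image _
  have huniv : (Set.univ : Set X) ⊆ (fun j : ℕ => (F ^ (j : ℤ)) x) '' (Set.Iio e) := by
    rw [← hxf.closure_eq]
    calc closure {p | ∃ i : ℕ, (F ^ (i : ℤ)) x = p}
        ⊆ closure ((fun j : ℕ => (F ^ (j : ℤ)) x) '' (Set.Iio e)) := closure_mono hsub
      _ = _ := hTfin.isClosed.closure_eq
  exact hinf (hTfin.subset huniv)

private lemma myHit {X : Type*} [MetricSpace X]
    (hno : ∀ p : X, (nhdsWithin p {p}ᶜ).NeBot)
    (g : ℕ → X) (hd : Dense {p | ∃ i : ℕ, g i = p}) (t : X) (ε : ℝ) (hε : 0 < ε) (N : ℕ) :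
    ∃ i : ℕ, N < i ∧ dist (g i) t < ε := by
  have hBmem : Metric.ball t ε ∈ nhds t := Metric.ball_mem_nhds t hε
  haveI : (nhdsWithin t {t}ᶜ).NeBot := hno t
  have hBinf : (Metric.ball t ε).Infinite := infinite_of_mem_nhds t hBmem
  have hFfin : (g '' Set.Iic N).Finite := (Set.finite_Iic N).image _
  have hU : (Metric.ball t ε \ (g '' Set.Iic N)).Nonempty := (hBinf.diff hFfin).nonempty
  have hUopen : IsOpen (Metric.ball t ε \ (g '' Set.Iic N)) :=
    Metric.isOpen_ball.sdiff hFfin.isClosed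
  obtain ⟨p, ⟨i, rfl⟩, hp⟩ := hd.exists_mem_open hUopen hU
  refine ⟨i, ?_, Metric.mem_ball.mp hp.1⟩
  by_contra hle
  exact hp.2 ⟨i, Set.mem_Iic.mpr (by omega), rfl⟩

theorem stmt11 {X : Type*} [MetricSpace X] [CompactSpace X]
    (f : X ≃ₜ X)
    (hno : ∀ p : X, (nhdsWithin p {p}ᶜ).NeBot)
    (htrans : ∃ p : X, Dense (orbitZ f.toEquiv p))
    (x y : X)
    (hxf : Dense {p | ∃ i : ℕ, (f.toEquiv ^ (i : ℤ)) x = p})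
    (hxb : Dense {p | ∃ i : ℕ, 1 ≤ i ∧ (f.toEquiv ^ (-(i : ℤ))) x = p})
    (hyf : Dense {p | ∃ i : ℕ, (f.toEquiv ^ (i : ℤ)) y = p})
    (hyb : Dense {p | ∃ i : ℕ, 1 ≤ i ∧ (f.toEquiv ^ (-(i : ℤ))) y = p})
    (horb : orbitZ f.toEquiv x ∩ orbitZ f.toEquiv y = ∅)
    (k : ℕ) :
    ∃ (h : ℕ → ℕ) (C : ℕ → ℕ → X) (m : ℕ → ℕ),
      StrictMono h ∧
      (∀ n, m n = h n + 1 + k) ∧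
      (∀ n i, C n i =
        if i ≤ h n then (f.toEquiv ^ (i : ℤ)) x
        else (f.toEquiv ^ ((i : ℤ) - (m n : ℤ))) y) ∧
      (∀ n : ℕ, 1 ≤ n → IsEpsChain (⇑f) (1 / (n : ℝ)) (C n) (m n) x y) ∧
      (∀ n, ¬ HasCyclicSubchain (C n) (m n)) ∧
      (∀ n, chainSupport (C n) (m n) ⊆ chainSupport (C (n + 1)) (m (n + 1))) ∧
      ((⋃ n, chainSupport (C n) (m n)) \ {x, y} =
        {p | ∃ i : ℕ, 1 ≤ i ∧ (f.toEquiv ^ (i : ℤ)) x = p} ∪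
        {p | ∃ j : ℕ, 1 ≤ j ∧ j ≤ k ∧ (f.toEquiv ^ (-(j : ℤ))) y = p}) := by
  set F := f.toEquiv with hF
  have hinf : (Set.univ : Set X).Infinite := myInfiniteUniv hno x
  have injx : Function.Injective (fun i : ℤ => (F ^ i) x) := myInj f hinf x hxf
  have injy : Function.Injective (fun i : ℤ => (F ^ i) y) := myInj f hinf y hyf
  have hdisj : ∀ a b : ℤ, (F ^ a) x ≠ (F ^ b) y := by
    intro a b hab
    have hmem : (F ^ a) x ∈ orbitZ F x ∩ orbitZ F y := ⟨⟨a, rfl⟩, ⟨b, hab.symm⟩⟩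
    rw [horb] at hmem
    exact hmem
  have hstep1 : ∀ (a : ℤ) (z : X), (F ^ (a + 1)) z = f ((F ^ a) z) := by
    intro a z
    rw [add_comm, zpow_one_add]
    rfl
  have key : ∀ N n : ℕ, ∃ i : ℕ, N < i ∧
      dist ((F ^ (i : ℤ)) x) ((F ^ (-(k : ℤ))) y) < 1 / ((n : ℝ) + 1) := by
    intro N n
    have hp : (0 : ℝ) < 1 / ((n : ℝ) + 1) := by positivity
    exact myHit hno (fun i : ℕ => (F ^ (i : ℤ)) x) hxf ((F ^ (-(k : ℤ))) y) _ hp N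
  choose ifun hi1 hi2 using key
  set h : ℕ → ℕ := chainH (fun n prev => ifun (prev + 1) n - 1) with hh
  have hstep : ∀ n : ℕ, h n < h (n + 1) ∧
      dist ((F ^ ((h (n + 1) + 1 : ℕ) : ℤ)) x) ((F ^ (-(k : ℤ))) y) < 1 / ((n : ℝ) + 1) := by
    intro n
    have h1 := hi1 (h n + 1) n
    have h2 := hi2 (h n + 1) n
    have he : h (n + 1) = ifun (h n + 1) n - 1 := rfl
    constructor
    · omega
    · have heq : h (n + 1) + 1 = ifun (h n + 1) n := by omega
      rw [heq]
      exact h2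
  have hmono : StrictMono h := strictMono_nat_of_lt_succ (fun n => (hstep n).1)
  set m : ℕ → ℕ := fun n => h n + 1 + k with hm
  set C : ℕ → ℕ → X := fun n i =>
    if i ≤ h n then (F ^ (i : ℤ)) x else (F ^ ((i : ℤ) - (m n : ℤ))) y with hC
  have Cle : ∀ n i, i ≤ h n → C n i = (F ^ (i : ℤ)) x := by
    intro n i hi
    simp only [hC]
    rw [if_pos hi]
  have Cgt : ∀ n i, h n < i → C n i = (F ^ ((i : ℤ) - (m n : ℤ))) y := by
    intro n i hi
    simp only [hC]
    rw [if_neg (by omega)]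
  have hmn : ∀ n, m n = h n + 1 + k := fun n => rfl
  have hCinj : ∀ n i j, C n i = C n j → i ≤ m n → j ≤ m n → i = j := by
    intro n i j hij hi hj
    by_cases h1 : i ≤ h n
    · by_cases h2 : j ≤ h n
      · rw [Cle n i h1, Cle n j h2] at hij
        have := injx hij
        exact_mod_cast this
      · rw [Cle n i h1, Cgt n j (by omega)] at hij
        exact absurd hij (hdisj _ _)
    · by_cases h2 : j ≤ h n
      · rw [Cgt n i (by omega), Cle n j h2] at hij
        exact absurd hij.symm (hdisj _ _)
      · rw [Cgt n i (by omega), Cgt n j (by omega)] at hij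
        have := injy hij
        omega
  have hchain : ∀ n : ℕ, 1 ≤ n → IsEpsChain (⇑f) (1 / (n : ℝ)) (C n) (m n) x y := by
    intro n hn
    obtain _ | p := n
    · omega
    have hpos : (0 : ℝ) < 1 / ((p + 1 : ℕ) : ℝ) := by positivity
    refine ⟨by simp only [hm]; omega, ?_, ?_, ?_⟩
    · rw [Cle (p + 1) 0 (Nat.zero_le _)]
      simp
    · rw [Cgt (p + 1) (m (p + 1)) (by have := hmn (p + 1); omega)]
      simp
    · intro i hilt
      by_cases h1 : i + 1 ≤ h (p + 1)
      · rw [Cle (p + 1) i (by omega), Cle (p + 1) (i + 1) h1]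
        have hc : ((i + 1 : ℕ) : ℤ) = (i : ℤ) + 1 := by omega
        rw [hc, hstep1, dist_self]
        exact hpos
      · by_cases h2 : i ≤ h (p + 1)
        · have hieq : i = h (p + 1) := by omega
          subst hieq
          rw [Cle (p + 1) _ le_rfl, Cgt (p + 1) _ (by omega)]
          have hc2 : ((h (p + 1) + 1 : ℕ) : ℤ) - (m (p + 1) : ℤ) = -(k : ℤ) := by
            have := hmn (p + 1); omega
          have hb := (hstep p).2
          have hc3 : ((h (p + 1) + 1 : ℕ) : ℤ) = ((h (p + 1) : ℕ) : ℤ) + 1 := by omega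
          rw [hc3, hstep1] at hb
          rw [hc2]
          have hcast : 1 / (((p + 1 : ℕ) : ℝ)) = 1 / ((p : ℝ) + 1) := by push_cast; ring
          rw [hcast]
          exact hb
        · rw [Cgt (p + 1) i (by omega), Cgt (p + 1) (i + 1) (by omega)]
          have hc : ((i + 1 : ℕ) : ℤ) - (m (p + 1) : ℤ) = ((i : ℤ) - (m (p + 1) : ℤ)) + 1 := by
            omega
          rw [hc, hstep1, dist_self]
          exact hpos
  have hacyc : ∀ n, ¬ HasCyclicSubchain (C n) (m n) := by
    intro n hcyc
    rcases hcyc with ⟨i, j, hi1, hi2, hj1, hj2, hne, heq⟩ | ⟨i, hi1, hi2, heq | heq⟩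
    · exact hne (hCinj n i j heq (by omega) (by omega))
    · have := hCinj n i 0 heq (by omega) (by omega); omega
    · have := hCinj n i (m n) heq (by omega) le_rfl; omega
  have hsupp : ∀ n, chainSupport (C n) (m n) ⊆ chainSupport (C (n + 1)) (m (n + 1)) := by
    intro n p hp
    obtain ⟨i, hi, hip⟩ := hp
    have hlt := (hstep n).1
    have hm1 := hmn n
    have hm2 := hmn (n + 1)
    by_cases h1 : i ≤ h n
    · exact ⟨i, by omega, by rw [Cle (n + 1) i (by omega), ← Cle n i h1]; exact hip⟩
    · refine ⟨i + (h (n + 1) - h n), by omega, ?_⟩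
      have hexp : ((i + (h (n + 1) - h n) : ℕ) : ℤ) - (m (n + 1) : ℤ) =
          (i : ℤ) - (m n : ℤ) := by omega
      rw [Cgt (n + 1) _ (by omega), hexp, ← Cgt n i (by omega)]
      exact hip
  refine ⟨h, C, m, hmono, hmn, fun n i => rfl, hchain, hacyc, hsupp, ?_⟩
  ext p
  simp only [Set.mem_diff, Set.mem_iUnion, Set.mem_insert_iff, Set.mem_singleton_iff,
    Set.mem_union, Set.mem_setOf_eq, chainSupport]
  constructor
  · rintro ⟨⟨n, i, hi, rfl⟩, hnxy⟩
    push_neg at hnxy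
    have hm1 := hmn n
    by_cases h1 : i ≤ h n
    · left
      refine ⟨i, ?_, (Cle n i h1).symm⟩
      rcases Nat.eq_zero_or_pos i with rfl | hp
      · exact absurd (by rw [Cle n 0 (Nat.zero_le _)]; simp) hnxy.1
      · exact hp
    · right
      have himn : i < m n := by
        rcases Nat.lt_or_ge i (m n) with hlt | hge
        · exact hlt
        · have : i = m n := by omega
          subst this
          exact absurd (by rw [Cgt n (m n) (by omega)]; simp) hnxy.2
      refine ⟨m n - i, by simp only [hm] at himn ⊢; omega, by simp only [hm] at himn ⊢; omega, ?_⟩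
      have hexp : (-((m n - i : ℕ) : ℤ)) = (i : ℤ) - (m n : ℤ) := by
        simp only [hm] at himn ⊢; omega
      rw [Cgt n i (by omega), hexp]
  · rintro (⟨i, hi1, rfl⟩ | ⟨j, hj1, hjk, rfl⟩)
    · have hle : i ≤ h i := hmono.le_apply
      have hm1 := hmn i
      refine ⟨⟨i, i, by simp only [hm]; omega, Cle i i hle⟩, ?_⟩
      rintro (hx | hy)
      · have hz : (F ^ (i : ℤ)) x = (F ^ (0 : ℤ)) x := by rw [zpow_zero]; simpa using hx
        have := injx hz
        omega
      · exact hdisj (i : ℤ) 0 (by rw [zpow_zero]; simpa using hy)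
    · have hm0 := hmn 0
      refine ⟨⟨0, m 0 - j, by simp only [hm]; omega, ?_⟩, ?_⟩
      · have hexp2 : ((m 0 - j : ℕ) : ℤ) - (m 0 : ℤ) = -(j : ℤ) := by
          simp only [hm]; omega
        rw [Cgt 0 (m 0 - j) (by simp only [hm]; omega), hexp2]
      rintro (hx | hy)
      · exact hdisj 0 (-(j : ℤ)) (by rw [zpow_zero]; exact hx.symm)
      · have : (F ^ (-(j : ℤ))) y = (F ^ (0 : ℤ)) y := by rw [zpow_zero]; simpa using hy
        have := injy this
        omega
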